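/- The mod-p fiber ℤ/p ⊗ W_n(ℤ) is isomorphic to 𝔽_p[x_1,…,x_n]/(x_i·x_j : 1 ≤ i ≤ j ≤ n); consequently for n ≥ 2 the socle of this local ring has dimension n > 1, so W_n(ℤ) is not Gorenstein at the prime containing p for n ≥ 2. -/

import Mathlib

open scoped TensorProduct


open scoped TensorProduct

def socleModelRing (p n : ℕ) : Type :=
  MvPolynomial (Fin n) (ZMod p) ⧸ Ideal.span
    { f : MvPolynomial (Fin n) (ZMod p) | ∃ i j : Fin n, i ≤ j ∧
        f = MvPolynomial.X i * MvPolynomial.X j }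

noncomputable instance (p n : ℕ) : CommRing (socleModelRing p n) :=
  inferInstanceAs (CommRing (MvPolynomial (Fin n) (ZMod p) ⧸ Ideal.span
    { f : MvPolynomial (Fin n) (ZMod p) | ∃ i j : Fin n, i ≤ j ∧
        f = MvPolynomial.X i * MvPolynomial.X j }))

noncomputable instance (p n : ℕ) : Algebra (ZMod p) (socleModelRing p n) :=
  inferInstanceAs (Algebra (ZMod p) (MvPolynomial (Fin n) (ZMod p) ⧸ Ideal.span
    { f : MvPolynomial (Fin n) (ZMod p) | ∃ i j : Fin n, i ≤ j ∧
        f = MvPolynomial.X i * MvPolynomial.X j }))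

noncomputable def socleModelVar (p n : ℕ) (i : Fin n) : socleModelRing p n :=
  Ideal.Quotient.mk _ (MvPolynomial.X i)

namespace WittSocle

section Model

open MvPolynomial TrivSqZeroExt Finset

variable (p n : ℕ) [hp : Fact p.Prime]

/-- The defining ideal of the socle model ring. -/
noncomputable def Ip : Ideal (MvPolynomial (Fin n) (ZMod p)) :=
  Ideal.span { f : MvPolynomial (Fin n) (ZMod p) | ∃ i j : Fin n, i ≤ j ∧
      f = MvPolynomial.X i * MvPolynomial.X j }

local notation "M" => socleModelRing p n

/-- The quotient map as an algebra hom. -/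
noncomputable def mkQ : MvPolynomial (Fin n) (ZMod p) →ₐ[ZMod p] M :=
  Ideal.Quotient.mkₐ (ZMod p) (Ip p n)

lemma mkQ_surjective : Function.Surjective (mkQ p n) :=
  Ideal.Quotient.mk_surjective

lemma x_eq (i : Fin n) : socleModelVar p n i = mkQ p n (X i) := rfl

lemma x_mul_x (i j : Fin n) : socleModelVar p n i * socleModelVar p n j = 0 := by
  have key : ∀ i j : Fin n, i ≤ j → socleModelVar p n i * socleModelVar p n j = 0 := by
    intro i j h
    rw [x_eq, x_eq, ← map_mul]
    show Ideal.Quotient.mk (Ip p n) (X i * X j) = 0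
    rw [Ideal.Quotient.eq_zero_iff_mem]
    exact Ideal.subset_span ⟨i, j, h, rfl⟩
  rcases le_total i j with h | h
  · exact key i j h
  · rw [mul_comm]; exact key j i h

/-- The comparison square-zero extension. -/
local notation "A" => TrivSqZeroExt (ZMod p) (Fin n → ZMod p)

/-- Evaluation of polynomials into the square-zero extension. -/
noncomputable def chi0 : MvPolynomial (Fin n) (ZMod p) →ₐ[ZMod p] A :=
  aeval (fun i => (inr (Pi.single i 1) : A))

lemma chi0_vanish : ∀ a ∈ Ip p n, chi0 p n a = 0 := by
  have hle : Ip p n ≤ RingHom.ker (chi0 p n).toRingHom := by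
    rw [Ip, Ideal.span_le]
    rintro f ⟨i, j, hij, rfl⟩
    simp only [SetLike.mem_coe, RingHom.mem_ker, AlgHom.toRingHom_eq_coe, RingHom.coe_coe]
    rw [map_mul, chi0, aeval_X, aeval_X, inr_mul_inr]
  exact fun a ha => hle ha

/-- The comparison map to the square-zero extension. -/
noncomputable def chi : M →ₐ[ZMod p] A :=
  Ideal.Quotient.liftₐ (Ip p n) (chi0 p n) (chi0_vanish p n)

lemma chi_mkQ (f : MvPolynomial (Fin n) (ZMod p)) : chi p n (mkQ p n f) = chi0 p n f := by
  have h := Ideal.Quotient.liftₐ_comp (Ip p n) (chi0 p n) (chi0_vanish p n)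
  calc chi p n (mkQ p n f) = ((chi p n).comp (mkQ p n)) f := rfl
    _ = chi0 p n f := DFunLike.congr_fun h f

lemma chi_x (i : Fin n) : chi p n (socleModelVar p n i) = inr (Pi.single i 1) := by
  rw [x_eq, chi_mkQ, chi0, aeval_X]

lemma chi_one : chi p n (1 : M) = 1 := map_one _

/-- The spanning family: `1` and the variables. -/
noncomputable def bM : Fin (n + 1) → M := Fin.cons 1 (socleModelVar p n)

lemma bM_zero : bM p n 0 = 1 := Fin.cons_zero _ _

lemma bM_succ (k : Fin n) : bM p n k.succ = socleModelVar p n k := Fin.cons_succ _ _ k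

lemma fst_chi_b_zero : (chi p n (bM p n 0)).fst = 1 := by
  rw [bM_zero, chi_one]; rfl

lemma fst_chi_b_succ (k : Fin n) : (chi p n (bM p n k.succ)).fst = 0 := by
  rw [bM_succ, chi_x]; exact fst_inr _ _

lemma snd_chi_b_zero : (chi p n (bM p n 0)).snd = 0 := by
  rw [bM_zero, chi_one]; rfl

lemma snd_chi_b_succ (k : Fin n) : (chi p n (bM p n k.succ)).snd = Pi.single k 1 := by
  rw [bM_succ, chi_x]; exact snd_inr _ _

lemma fst_chi_sum (c : Fin (n + 1) → ZMod p) :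
    (chi p n (∑ i, c i • bM p n i)).fst = c 0 := by
  rw [map_sum, fst_sum, Fin.sum_univ_succ]
  simp only [map_smul, fst_smul, fst_chi_b_zero, fst_chi_b_succ, smul_zero, smul_eq_mul,
    mul_one, mul_zero]
  rw [Finset.sum_const_zero, add_zero]

lemma snd_chi_sum (c : Fin (n + 1) → ZMod p) :
    (chi p n (∑ i, c i • bM p n i)).snd = fun k => c k.succ := by
  rw [map_sum, snd_sum, Fin.sum_univ_succ]
  simp only [map_smul, snd_smul, snd_chi_b_zero, snd_chi_b_succ, smul_zero, zero_add]
  have hs : ∀ k : Fin n, c k.succ • (Pi.single k 1 : Fin n → ZMod p)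
      = Pi.single k (c k.succ) := by
    intro k
    rw [← Pi.single_smul, smul_eq_mul, mul_one]
  rw [Finset.sum_congr rfl (fun k _ => hs k), Finset.univ_sum_single]

lemma indep {c : Fin (n + 1) → ZMod p} (h : ∑ i, c i • bM p n i = 0) : c = 0 := by
  have h1 : c 0 = 0 := by
    have h' := congrArg (fun z : M => (chi p n z).fst) h
    rw [fst_chi_sum] at h'
    simpa using h'
  have h2 : ∀ k : Fin n, c k.succ = 0 := by
    have h' := congrArg (fun z : M => (chi p n z).snd) h
    rw [snd_chi_sum] at h'
    intro k
    have := congrFun h' k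
    simpa using this
  funext i
  induction i using Fin.cases with
  | zero => exact h1
  | succ k => exact h2 k

lemma single_sum (i : Fin (n + 1)) (a : ZMod p) :
    ∑ j, (Pi.single i a : Fin (n + 1) → ZMod p) j • bM p n j = a • bM p n i := by
  rw [Finset.sum_eq_single_of_mem i (Finset.mem_univ i)
    (fun j _ hj => by rw [Pi.single_eq_of_ne hj, zero_smul]), Pi.single_eq_same]

lemma exists_rep (m : M) : ∃ c : Fin (n + 1) → ZMod p, m = ∑ i, c i • bM p n i := by
  obtain ⟨f, rfl⟩ := mkQ_surjective p n m
  induction f using MvPolynomial.induction_on with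
  | C a =>
    refine ⟨Pi.single 0 a, ?_⟩
    rw [single_sum]
    rw [show (C a : MvPolynomial (Fin n) (ZMod p)) = a • 1 by
      rw [smul_eq_C_mul, mul_one]]
    rw [map_smul, map_one, bM_zero]
  | add f g hf hg =>
    obtain ⟨cf, hcf⟩ := hf
    obtain ⟨cg, hcg⟩ := hg
    refine ⟨cf + cg, ?_⟩
    rw [map_add, hcf, hcg, ← Finset.sum_add_distrib]
    exact Finset.sum_congr rfl (fun i _ => by rw [Pi.add_apply, add_smul])
  | mul_X f i hf =>
    obtain ⟨c, hc⟩ := hf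
    refine ⟨Pi.single i.succ (c 0), ?_⟩
    rw [single_sum, map_mul, hc, Finset.sum_mul, Fin.sum_univ_succ]
    have h1 : ∀ k : Fin n, (c k.succ • bM p n k.succ) * mkQ p n (X i) = 0 := by
      intro k
      rw [bM_succ, smul_mul_assoc, show mkQ p n (X i) = socleModelVar p n i from rfl,
        x_mul_x, smul_zero]
    rw [Finset.sum_congr rfl (fun k _ => h1 k), Finset.sum_const_zero, add_zero,
      bM_zero, smul_mul_assoc, one_mul,
      show mkQ p n (X i) = socleModelVar p n i from rfl, bM_succ]

lemma nontrivialM : Nontrivial M := by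
  refine ⟨1, 0, fun h => ?_⟩
  have := congrArg (fun z : M => (chi p n z).fst) h
  simp only [chi_one, map_zero] at this
  have h1 : (1 : ZMod p) = 0 := by simpa using this
  haveI : Fact (1 < p) := ⟨hp.out.one_lt⟩
  exact one_ne_zero h1

lemma isUnit_of_sum (c : Fin (n + 1) → ZMod p) (hc : c 0 ≠ 0) :
    IsUnit (∑ i, c i • bM p n i) := by
  set ξ : M := ∑ k : Fin n, c k.succ • socleModelVar p n k with hξ
  have hsum : ∑ i, c i • bM p n i = c 0 • 1 + ξ := by
    rw [Fin.sum_univ_succ, bM_zero, hξ]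
    first
      | rfl
      | (congr 1
         exact Finset.sum_congr rfl (fun k _ => by rw [bM_succ]))
  have hxi2 : ξ * ξ = 0 := by
    rw [hξ, Finset.sum_mul_sum]
    refine Finset.sum_eq_zero (fun k _ => Finset.sum_eq_zero (fun l _ => ?_))
    rw [smul_mul_smul_comm, x_mul_x, smul_zero]
  have hinv : (c 0 • (1 : M) + ξ) * ((c 0)⁻¹ • 1 - ((c 0)⁻¹ * (c 0)⁻¹) • ξ) = 1 := by
    rw [add_mul, mul_sub, mul_sub, smul_mul_smul_comm, smul_mul_smul_comm,
      mul_smul_comm, mul_smul_comm, hxi2, smul_zero, sub_zero,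
      mul_inv_cancel₀ hc, one_smul, mul_one, mul_one, one_mul]
    have hcc : c 0 * ((c 0)⁻¹ * (c 0)⁻¹) = (c 0)⁻¹ := by
      field_simp
    rw [hcc, sub_add_cancel]
  rw [hsum]
  exact IsUnit.of_mul_eq_one _ hinv

lemma isLocal : IsLocalRing M := by
  haveI := nontrivialM p n
  refine IsLocalRing.of_isUnit_or_isUnit_one_sub_self (fun a => ?_)
  obtain ⟨c, rfl⟩ := exists_rep p n a
  by_cases h : c 0 = 0
  · right
    set c' : Fin (n + 1) → ZMod p := (Pi.single 0 1 : Fin (n + 1) → ZMod p) - c with hc'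
    have hstep : ∀ i : Fin (n + 1),
        c' i • bM p n i
          = (Pi.single 0 1 : Fin (n + 1) → ZMod p) i • bM p n i - c i • bM p n i :=
      fun i => by rw [hc', Pi.sub_apply, sub_smul]
    have key : (1 : M) - ∑ i, c i • bM p n i = ∑ i, c' i • bM p n i := by
      rw [Finset.sum_congr rfl (fun i _ => hstep i), Finset.sum_sub_distrib, single_sum,
        one_smul, bM_zero]
    rw [key]
    apply isUnit_of_sum
    haveI : Fact (1 < p) := ⟨hp.out.one_lt⟩
    have : c' 0 = 1 := by rw [hc', Pi.sub_apply, Pi.single_eq_same, h, sub_zero]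
    rw [this]
    exact one_ne_zero
  · left
    exact isUnit_of_sum p n c h

/-- The span of the variables as an ideal. -/
noncomputable def J : Ideal M := Ideal.span (Set.range (socleModelVar p n))

lemma mul_x_rep (m : M) (i : Fin n) :
    ∃ d : ZMod p, m * socleModelVar p n i = d • socleModelVar p n i := by
  obtain ⟨c, rfl⟩ := exists_rep p n m
  refine ⟨c 0, ?_⟩
  rw [Finset.sum_mul, Fin.sum_univ_succ, bM_zero, smul_mul_assoc, one_mul]
  have h1 : ∀ k : Fin n, (c k.succ • bM p n k.succ) * socleModelVar p n i = 0 := by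
    intro k
    rw [bM_succ, smul_mul_assoc, x_mul_x, smul_zero]
  rw [Finset.sum_congr rfl (fun k _ => h1 k), Finset.sum_const_zero, add_zero]

lemma mem_J_iff (m : M) :
    m ∈ J p n ↔ ∃ v : Fin n → ZMod p, m = ∑ j, v j • socleModelVar p n j := by
  constructor
  · intro hm
    induction hm using Submodule.span_induction with
    | mem x hx =>
      obtain ⟨i, rfl⟩ := hx
      refine ⟨Pi.single i 1, ?_⟩
      rw [Finset.sum_eq_single_of_mem i (Finset.mem_univ i)
        (fun j _ hj => by rw [Pi.single_eq_of_ne hj, zero_smul]), Pi.single_eq_same,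
        one_smul]
    | zero => exact ⟨0, by simp⟩
    | add x y hx hy ihx ihy =>
      obtain ⟨v1, rfl⟩ := ihx
      obtain ⟨v2, rfl⟩ := ihy
      refine ⟨v1 + v2, ?_⟩
      rw [← Finset.sum_add_distrib]
      exact Finset.sum_congr rfl (fun j _ => by rw [Pi.add_apply, add_smul])
    | smul a x hx ihx =>
      obtain ⟨v, rfl⟩ := ihx
      have key : ∀ j : Fin n, ∃ d : ZMod p,
          a * (v j • socleModelVar p n j) = d • socleModelVar p n j := by
        intro j
        obtain ⟨d, hd⟩ := mul_x_rep p n a j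
        exact ⟨v j * d, by rw [mul_smul_comm, hd, smul_smul]⟩
      choose d hd using key
      refine ⟨d, ?_⟩
      rw [smul_eq_mul, Finset.mul_sum]
      exact Finset.sum_congr rfl (fun j _ => hd j)
  · rintro ⟨v, rfl⟩
    exact Submodule.sum_mem _ (fun j _ =>
      Submodule.smul_of_tower_mem _ _ (Ideal.subset_span ⟨j, rfl⟩))

lemma snd_chi_xsum (v : Fin n → ZMod p) :
    (chi p n (∑ j, v j • socleModelVar p n j)).snd = v := by
  rw [map_sum, snd_sum]
  simp only [map_smul, snd_smul, chi_x]
  have : ∀ k : Fin n, v k • (Pi.single k 1 : Fin n → ZMod p) = Pi.single k (v k) := by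
    intro k
    rw [← Pi.single_smul, smul_eq_mul, mul_one]
  simp only [snd_inr]
  rw [Finset.sum_congr rfl (fun k _ => this k), Finset.univ_sum_single]

lemma fst_chi_xsum (v : Fin n → ZMod p) :
    (chi p n (∑ j, v j • socleModelVar p n j)).fst = 0 := by
  rw [map_sum, fst_sum]
  simp only [map_smul, fst_smul, chi_x, fst_inr, smul_zero]
  exact Finset.sum_const_zero

lemma one_not_mem_J : (1 : M) ∉ J p n := by
  intro h
  obtain ⟨v, hv⟩ := (mem_J_iff p n 1).mp h
  have h' := congrArg (fun z : M => (chi p n z).fst) hv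
  rw [fst_chi_xsum, chi_one, fst_one] at h'
  haveI : Fact (1 < p) := ⟨hp.out.one_lt⟩
  exact one_ne_zero h'

lemma J_isMaximal : (J p n).IsMaximal := by
  rw [Ideal.isMaximal_iff]
  refine ⟨one_not_mem_J p n, fun I x hJI hxJ hxI => ?_⟩
  obtain ⟨c, rfl⟩ := exists_rep p n x
  have hc0 : c 0 ≠ 0 := by
    intro h0
    apply hxJ
    rw [mem_J_iff]
    refine ⟨fun k => c k.succ, ?_⟩
    rw [Fin.sum_univ_succ, h0, zero_smul, zero_add]
    exact Finset.sum_congr rfl (fun k _ => by rw [bM_succ])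
  set ξ : M := ∑ k : Fin n, c k.succ • socleModelVar p n k with hξ
  have hξJ : ξ ∈ J p n := (mem_J_iff p n ξ).mpr ⟨fun k => c k.succ, rfl⟩
  have h2 : ∀ k : Fin n, c k.succ • bM p n k.succ = c k.succ • socleModelVar p n k :=
    fun k => by rw [bM_succ]
  have hdecomp : (∑ i, c i • bM p n i) - ξ = c 0 • 1 := by
    rw [Fin.sum_univ_succ, bM_zero, hξ, Finset.sum_congr rfl (fun k _ => h2 k)]
    abel
  have hmem : c 0 • (1 : M) ∈ I := by
    rw [← hdecomp]
    exact Submodule.sub_mem I hxI (hJI hξJ)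
  have hone : (1 : M) = ((c 0)⁻¹ • (1 : M)) * (c 0 • 1) := by
    rw [smul_mul_smul_comm, inv_mul_cancel₀ hc0, one_smul, one_mul]
  rw [hone]
  exact Ideal.mul_mem_left I _ hmem

lemma x_mem_colon (k : Fin n) :
    socleModelVar p n k ∈ Submodule.colon (⊥ : Submodule M M) (J p n) := by
  rw [Submodule.mem_colon]
  intro q hq
  obtain ⟨v, rfl⟩ := (mem_J_iff p n q).mp hq
  rw [Submodule.mem_bot, smul_eq_mul, Finset.mul_sum]
  refine Finset.sum_eq_zero (fun j _ => ?_)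
  rw [mul_smul_comm, x_mul_x, smul_zero]

lemma sum_x_mem_colon (v : Fin n → ZMod p) :
    (∑ j, v j • socleModelVar p n j) ∈ Submodule.colon (⊥ : Submodule M M) (J p n) :=
  Submodule.sum_mem _ (fun j _ => Submodule.smul_of_tower_mem _ _ (x_mem_colon p n j))

lemma c0_eq_zero_of_mem_colon (hn : 0 < n) {m : M}
    (hm : m ∈ Submodule.colon (⊥ : Submodule M M) (J p n))
    (c : Fin (n + 1) → ZMod p) (hc : m = ∑ i, c i • bM p n i) : c 0 = 0 := by
  set i0 : Fin n := ⟨0, hn⟩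
  have hmul : m * socleModelVar p n i0 = c 0 • socleModelVar p n i0 := by
    rw [hc, Finset.sum_mul, Fin.sum_univ_succ, bM_zero, smul_mul_assoc, one_mul]
    have h1 : ∀ k : Fin n, (c k.succ • bM p n k.succ) * socleModelVar p n i0 = 0 :=
      fun k => by rw [bM_succ, smul_mul_assoc, x_mul_x, smul_zero]
    rw [Finset.sum_congr rfl (fun k _ => h1 k), Finset.sum_const_zero, add_zero]
  have hzero : c 0 • socleModelVar p n i0 = 0 := by
    rw [← hmul]
    have := Submodule.mem_colon.mp hm (socleModelVar p n i0)
      (Ideal.subset_span ⟨i0, rfl⟩)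
    rw [smul_eq_mul] at this
    exact (Submodule.mem_bot M).mp this
  have h' := congrArg (fun z : M => (chi p n z).snd i0) hzero
  rw [map_smul, snd_smul, chi_x, map_zero, snd_zero] at h'
  simpa using h'

/-- The socle of the model ring is `n`-dimensional. -/
noncomputable def colonEquiv (hn : 0 < n) :
    ↥(Submodule.colon (⊥ : Submodule M M) (J p n)) ≃ₗ[ZMod p] (Fin n → ZMod p) where
  toFun m := (chi p n (m : M)).snd
  map_add' m1 m2 := by
    rw [Submodule.coe_add, map_add, snd_add]
  map_smul' a m := by
    rw [Submodule.coe_smul_of_tower, map_smul, snd_smul, RingHom.id_apply]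
  invFun v := ⟨∑ j, v j • socleModelVar p n j, sum_x_mem_colon p n v⟩
  right_inv v := snd_chi_xsum p n v
  left_inv m := by
    apply Subtype.ext
    obtain ⟨c, hc⟩ := exists_rep p n (m : M)
    have hc0 : c 0 = 0 := c0_eq_zero_of_mem_colon p n hn m.2 c hc
    show ∑ j, (chi p n (m : M)).snd j • socleModelVar p n j = (m : M)
    rw [hc, snd_chi_sum]
    have h2 : ∀ k : Fin n, c k.succ • bM p n k.succ = c k.succ • socleModelVar p n k :=
      fun k => by rw [bM_succ]
    rw [Fin.sum_univ_succ, hc0, zero_smul, zero_add,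
      Finset.sum_congr rfl (fun k _ => h2 k)]

lemma colon_rank (hn : 0 < n) :
    Module.rank (ZMod p) ↥(Submodule.colon (⊥ : Submodule M M) (J p n)) = n := by
  rw [LinearEquiv.rank_eq (colonEquiv p n hn), rank_fin_fun]

end Model

end WittSocle



open WittVector Finset

namespace WittSocle

variable (p : ℕ) [hp : Fact p.Prime]

local notation "W" => WittVector p ℤ

lemma ghost_explicit (x : W) (j : ℕ) :
    ghostComponent j x = ∑ i ∈ range (j + 1), (p : ℤ) ^ i * x.coeff i ^ p ^ (j - i) := by
  rw [ghostComponent_apply, aeval_wittPolynomial]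

lemma pow_p_dvd (a : ℤ) (k : ℕ) : (p : ℤ) ^ (k + 1) ∣ a ^ p ^ (k + 1) - a ^ p ^ k := by
  have h1 : (p : ℤ) ∣ a ^ p - a := by
    have : ((a ^ p - a : ℤ) : ZMod p) = 0 := by
      push_cast
      rw [ZMod.pow_card]
      ring
    exact (ZMod.intCast_zmod_eq_zero_iff_dvd _ _).mp this
  have h2 := dvd_sub_pow_of_dvd_sub h1 k
  have : (a ^ p) ^ p ^ k = a ^ p ^ (k + 1) := by
    rw [← pow_mul, pow_succ']
  rwa [this] at h2

/-- "previous ghost component", with convention that it is `0` for `j = 0`. -/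
noncomputable def gprev (j : ℕ) (x : W) : ℤ := if j = 0 then 0 else ghostComponent (j - 1) x

lemma dvd_ghost_sub (j : ℕ) (x : W) :
    (p : ℤ) ^ j ∣ ghostComponent j x - gprev p j x := by
  rcases j with _ | m
  · simp
  · rw [gprev, if_neg (Nat.succ_ne_zero m), Nat.add_sub_cancel]
    have key : ghostComponent (m + 1) x - ghostComponent m x
        = (p : ℤ) ^ (m + 1) * x.coeff (m + 1) ^ p ^ (m + 1 - (m + 1)) +
          ∑ i ∈ range (m + 1),
            (p : ℤ) ^ i * (x.coeff i ^ p ^ (m + 1 - i) - x.coeff i ^ p ^ (m - i)) := by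
      rw [ghost_explicit, ghost_explicit, sum_range_succ]
      rw [add_sub_right_comm, ← Finset.sum_sub_distrib, add_comm]
      congr 1
      apply Finset.sum_congr rfl
      intro i _
      ring
    rw [key]
    apply dvd_add
    · exact Dvd.intro _ rfl
    · apply Finset.dvd_sum
      intro i hi
      have him : i ≤ m := Nat.lt_succ_iff.mp (mem_range.mp hi)
      have h2 := pow_p_dvd p (x.coeff i) (m - i)
      have e1 : m + 1 - i = m - i + 1 := by omega
      rw [e1]
      calc (p : ℤ) ^ (m + 1) = (p : ℤ) ^ i * (p : ℤ) ^ (m - i + 1) := by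
            rw [← pow_add]; congr 1; omega
        _ ∣ (p : ℤ) ^ i * (x.coeff i ^ p ^ (m - i + 1) - x.coeff i ^ p ^ (m - i)) :=
            mul_dvd_mul_left _ h2

/-- The integer `(w_j(x) - w_{j-1}(x)) / p^j`. -/
noncomputable def delta (j : ℕ) (x : W) : ℤ := (ghostComponent j x - gprev p j x) / (p : ℤ) ^ j

lemma delta_mul_pow (j : ℕ) (x : W) :
    delta p j x * (p : ℤ) ^ j = ghostComponent j x - gprev p j x :=
  Int.ediv_mul_cancel (dvd_ghost_sub p j x)

lemma ppow_ne_zero (j : ℕ) : ((p : ℤ) ^ j) ≠ 0 :=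
  pow_ne_zero _ (Int.natCast_ne_zero.mpr hp.out.ne_zero)

lemma delta_add (j : ℕ) (x y : W) : delta p j (x + y) = delta p j x + delta p j y := by
  apply mul_right_cancel₀ (ppow_ne_zero p j)
  rw [add_mul, delta_mul_pow, delta_mul_pow, delta_mul_pow, map_add]
  unfold gprev
  split_ifs <;> simp [map_add] <;> ring

lemma ghost_zsmul_one (j : ℕ) (c : ℤ) : ghostComponent j (c • (1 : W)) = c := by
  rw [map_zsmul, map_one, smul_eq_mul, mul_one]

lemma delta_zsmul_one (j : ℕ) (c : ℤ) :
    delta p j (c • (1 : W)) = if j = 0 then c else 0 := by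
  apply mul_right_cancel₀ (ppow_ne_zero p j)
  rw [delta_mul_pow, gprev, ghost_zsmul_one]
  split_ifs with h
  · rw [h, pow_zero, mul_one, sub_zero]
  · rw [ghost_zsmul_one, sub_self, zero_mul]

lemma ghost_iterate_vone (k j : ℕ) :
    ghostComponent j (verschiebung^[k] (1 : W)) = if k ≤ j then (p : ℤ) ^ k else 0 := by
  induction k generalizing j with
  | zero => simp
  | succ k ih =>
    rw [Function.iterate_succ_apply']
    rcases j with _ | m
    · rw [ghostComponent_zero_verschiebung, if_neg (by omega)]
    · rw [ghostComponent_verschiebung, ih]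
      split_ifs with h1 h2 h2
      · rw [pow_succ']
      · omega
      · omega
      · rw [mul_zero]

lemma delta_iterate_vone (j k : ℕ) (hk : k ≠ 0) :
    delta p j (verschiebung^[k] (1 : W)) = if j = k then 1 else 0 := by
  apply mul_right_cancel₀ (ppow_ne_zero p j)
  rw [delta_mul_pow]
  rcases j with _ | m
  · rw [gprev, if_pos rfl, ghost_iterate_vone, sub_zero, if_neg (by omega),
      if_neg (by omega), zero_mul]
  · rw [gprev, if_neg (Nat.succ_ne_zero m), Nat.add_sub_cancel, ghost_iterate_vone,
      ghost_iterate_vone]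
    split_ifs <;> simp_all <;> omega

lemma delta_zero_eq (x : W) : delta p 0 x = ghostComponent 0 x := by
  have := delta_mul_pow p 0 x
  rw [pow_zero, mul_one, gprev, if_pos rfl, sub_zero] at this
  exact this

lemma coeff_eq_of_ghost_eq (x y : W) (N : ℕ)
    (h : ∀ j ≤ N, ghostComponent j x = ghostComponent j y) :
    ∀ i ≤ N, x.coeff i = y.coeff i := by
  intro i
  induction i using Nat.strong_induction_on with
  | _ i IH =>
    intro hi
    have hg := h i hi
    rw [ghost_explicit, ghost_explicit, sum_range_succ, sum_range_succ] at hg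
    have hsum : ∑ k ∈ range i, (p : ℤ) ^ k * x.coeff k ^ p ^ (i - k)
        = ∑ k ∈ range i, (p : ℤ) ^ k * y.coeff k ^ p ^ (i - k) := by
      apply Finset.sum_congr rfl
      intro k hk
      rw [IH k (mem_range.mp hk) (le_trans (le_of_lt (mem_range.mp hk)) hi)]
    rw [hsum] at hg
    have hmul : (p : ℤ) ^ i * x.coeff i = (p : ℤ) ^ i * y.coeff i := by
      have := add_left_cancel hg
      simpa using this
    exact mul_left_cancel₀ (ppow_ne_zero p i) hmul

end WittSocle

namespace WittSocle

section Truncated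

variable (p : ℕ) [hp : Fact p.Prime] (n : ℕ)

local notation "W" => WittVector p ℤ
local notation "T" => TruncatedWittVector p (n + 1) ℤ

lemma truncate_out (a : T) : WittVector.truncate (n + 1) a.out = a :=
  a.truncateFun_out

lemma ghost_congr {x y : W} (h : WittVector.truncate (n + 1) x = WittVector.truncate (n + 1) y)
    {j : ℕ} (hj : j ≤ n) : ghostComponent j x = ghostComponent j y := by
  rw [ghost_explicit, ghost_explicit]
  apply Finset.sum_congr rfl
  intro i hi
  have hin : i < n + 1 := by have := mem_range.mp hi; omega
  have hc : x.coeff i = y.coeff i := by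
    have := congrArg (fun z : T => z.coeff ⟨i, hin⟩) h
    simpa [WittVector.coeff_truncate] using this
  rw [hc]

lemma delta_congr {x y : W}
    (h : WittVector.truncate (n + 1) x = WittVector.truncate (n + 1) y)
    {j : ℕ} (hj : j ≤ n) : delta p j x = delta p j y := by
  unfold delta gprev
  rw [ghost_congr p n h hj]
  rcases j with _ | m
  · rfl
  · rw [ghost_congr p n h (by omega : m + 1 - 1 ≤ n)]

/-- mod-`p` reduction of the `j`-th normalized ghost difference. -/
noncomputable def Dl (j : Fin (n + 1)) (a : T) : ZMod p := ((delta p j a.out : ℤ) : ZMod p)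

lemma Dl_add (j : Fin (n + 1)) (a b : T) :
    Dl p n j (a + b) = Dl p n j a + Dl p n j b := by
  have h : WittVector.truncate (n + 1) (a + b).out
      = WittVector.truncate (n + 1) (a.out + b.out) := by
    rw [map_add, truncate_out, truncate_out, truncate_out]
  unfold Dl
  rw [delta_congr p n h j.is_le, delta_add]
  push_cast
  ring

/-- The images of `V^(i+1)(1)` in the truncated Witt vectors. -/
noncomputable def tW (i : Fin n) : T :=
  WittVector.truncate (n + 1) (verschiebung^[(i : ℕ) + 1] (1 : W))

/-- `1` together with the `tW i`. -/
noncomputable def uW : Fin (n + 1) → T := Fin.cons 1 (tW p n)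

lemma Dl_one (j : Fin (n + 1)) : Dl p n j (1 : T) = if (j : ℕ) = 0 then 1 else 0 := by
  unfold Dl
  have h : WittVector.truncate (n + 1) (1 : T).out
      = WittVector.truncate (n + 1) ((1 : ℤ) • (1 : W)) := by
    rw [truncate_out, one_smul, map_one]
  rw [delta_congr p n h j.is_le, delta_zsmul_one]
  split_ifs <;> simp

lemma Dl_t (j : Fin (n + 1)) (i : Fin n) :
    Dl p n j (tW p n i) = if (j : ℕ) = (i : ℕ) + 1 then 1 else 0 := by
  unfold Dl tW
  rw [delta_congr p n (truncate_out p n _) j.is_le,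
    delta_iterate_vone p _ _ (Nat.succ_ne_zero _)]
  split_ifs <;> simp

lemma Dl_u (j i : Fin (n + 1)) : Dl p n j (uW p n i) = if i = j then 1 else 0 := by
  induction i using Fin.cases with
  | zero =>
    rw [uW, Fin.cons_zero, Dl_one]
    by_cases h : (j : ℕ) = 0
    · rw [if_pos h, if_pos (by exact (Fin.ext h.symm))]
    · rw [if_neg h, if_neg (fun hh => h (by rw [← hh]; rfl))]
  | succ i =>
    rw [uW, Fin.cons_succ, Dl_t]
    by_cases h : (j : ℕ) = (i : ℕ) + 1
    · rw [if_pos h, if_pos (by apply Fin.ext; simpa using h.symm)]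
    · rw [if_neg h, if_neg (by intro hh; apply h; rw [← hh]; simp)]

lemma vmul (x y : W) : verschiebung x * verschiebung y = (p : ℤ) • verschiebung (x * y) := by
  have h1 : verschiebung x * verschiebung y
      = verschiebung (x * frobenius (verschiebung y)) :=
    (verschiebung_mul_frobenius x (verschiebung y)).symm
  rw [frobenius_verschiebung] at h1
  have h2 : x * (y * (p : W)) = (p : ℤ) • (x * y) := by
    rw [zsmul_eq_mul]
    push_cast
    ring
  rw [h1, h2, map_zsmul]

lemma t_mul_t (i j : Fin n) :
    tW p n i * tW p n j =
      (p : ℤ) • WittVector.truncate (n + 1)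
        (verschiebung (verschiebung^[(i : ℕ)] (1 : W) * verschiebung^[(j : ℕ)] (1 : W))) := by
  rw [tW, tW, ← map_mul, Function.iterate_succ_apply', Function.iterate_succ_apply', vmul,
    map_zsmul]

lemma span_T (a : T) :
    a ∈ Submodule.span ℤ (insert (1 : T) (Set.range (tW p n))) := by
  set y := a.out with hy
  set b : W := delta p 0 y • (1 : W)
      + ∑ i : Fin n, delta p ((i : ℕ) + 1) y • verschiebung^[(i : ℕ) + 1] (1 : W) with hb
  have hg : ∀ j ≤ n, ghostComponent j b = ghostComponent j y := by
    intro j hj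
    rw [hb, map_add, map_zsmul, map_one, map_sum]
    simp only [map_zsmul, ghost_iterate_vone, smul_eq_mul, mul_one]
    rw [delta_zero_eq]
    have step : ∀ i : Fin n,
        delta p ((i : ℕ) + 1) y * (if (i : ℕ) + 1 ≤ j then (p : ℤ) ^ ((i : ℕ) + 1) else 0)
        = if (i : ℕ) < j then ghostComponent ((i : ℕ) + 1) y - ghostComponent (i : ℕ) y
          else 0 := by
      intro i
      split_ifs with h1 h2 h2
      · have hd := delta_mul_pow p ((i : ℕ) + 1) y
        rw [gprev, if_neg (Nat.succ_ne_zero _), Nat.add_sub_cancel] at hd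
        exact hd
      · omega
      · omega
      · rw [mul_zero]
    rw [Finset.sum_congr rfl (fun i _ => step i)]
    rw [Fin.sum_univ_eq_sum_range
      (fun i => if i < j then ghostComponent (i + 1) y - ghostComponent i y else 0) n]
    have hss : ∑ i ∈ range n,
        (if i < j then ghostComponent (i + 1) y - ghostComponent i y else 0)
        = ∑ i ∈ range j, (ghostComponent (i + 1) y - ghostComponent i y) := by
      rw [← Finset.sum_subset (Finset.range_subset_range.mpr hj)
        (fun x _ hnx => by rw [if_neg (by simpa using hnx)])]
      exact Finset.sum_congr rfl (fun i hi => if_pos (mem_range.mp hi))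
    rw [hss, Finset.sum_range_sub (fun i => ghostComponent i y) j]
    ring
  have hcoeff := coeff_eq_of_ghost_eq p b y n hg
  have htr : WittVector.truncate (n + 1) b = a := by
    rw [← truncate_out p n a]
    apply TruncatedWittVector.ext
    intro i
    rw [WittVector.coeff_truncate, WittVector.coeff_truncate]
    exact hcoeff i i.is_le
  rw [← htr, hb, map_add, map_zsmul, map_one, map_sum]
  apply Submodule.add_mem
  · exact Submodule.smul_mem _ _ (Submodule.subset_span (Set.mem_insert _ _))
  · apply Submodule.sum_mem
    intro i _
    rw [map_zsmul]
    exact Submodule.smul_mem _ _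
      (Submodule.subset_span (Set.mem_insert_of_mem _ ⟨i, rfl⟩))

end Truncated

end WittSocle


namespace WittSocle

section Main

open MvPolynomial Finset WittVector

variable (p : ℕ) [hp : Fact p.Prime] (n : ℕ)

local notation "W" => WittVector p ℤ
local notation "T" => TruncatedWittVector p (n + 1) ℤ
local notation "Q" => TensorProduct ℤ (ZMod p) (TruncatedWittVector p (n + 1) ℤ)
local notation "M" => socleModelRing p n

/-- The comparison map from polynomials to the mod-`p` fiber of truncated Witt vectors. -/
noncomputable def Galg : MvPolynomial (Fin n) (ZMod p) →ₐ[ZMod p] Q :=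
  MvPolynomial.aeval (fun i => (1 : ZMod p) ⊗ₜ[ℤ] tW p n i)

lemma Galg_vanish : ∀ a ∈ Ip p n, Galg p n a = 0 := by
  have hle : Ip p n ≤ RingHom.ker (Galg p n).toRingHom := by
    rw [Ip, Ideal.span_le]
    rintro f ⟨i, j, hij, rfl⟩
    simp only [SetLike.mem_coe, RingHom.mem_ker, AlgHom.toRingHom_eq_coe, RingHom.coe_coe]
    rw [map_mul, Galg, MvPolynomial.aeval_X, MvPolynomial.aeval_X,
      Algebra.TensorProduct.tmul_mul_tmul, one_mul, t_mul_t]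
    rw [TensorProduct.tmul_smul, TensorProduct.smul_tmul']
    have hz : ((p : ℤ) • (1 : ZMod p)) = 0 := by
      rw [zsmul_eq_mul, mul_one]
      push_cast
      exact ZMod.natCast_self p
    rw [hz, TensorProduct.zero_tmul]
  exact fun a ha => hle ha

/-- The comparison ring hom from the model ring to the mod-`p` fiber. -/
noncomputable def G : M →+* Q :=
  Ideal.Quotient.lift (Ip p n) (Galg p n).toRingHom (Galg_vanish p n)

lemma G_mkQ (f : MvPolynomial (Fin n) (ZMod p)) : G p n (mkQ p n f) = Galg p n f := by
  show Ideal.Quotient.lift _ _ _ (Ideal.Quotient.mk (Ip p n) f) = _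
  rw [Ideal.Quotient.lift_mk]
  rfl

/-- Polynomial lifts of the spanning family. -/
noncomputable def pbF : Fin (n + 1) → MvPolynomial (Fin n) (ZMod p) :=
  Fin.cons 1 (fun k => MvPolynomial.X k)

lemma G_sum (c : Fin (n + 1) → ZMod p) :
    G p n (∑ i, c i • bM p n i) = ∑ i, c i ⊗ₜ[ℤ] uW p n i := by
  have hpb : ∀ i : Fin (n + 1), mkQ p n (pbF p n i) = bM p n i := by
    intro i
    induction i using Fin.cases with
    | zero => rw [pbF, Fin.cons_zero, map_one, bM_zero]
    | succ k => rw [pbF, Fin.cons_succ, bM_succ]; rfl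
  have hb : ∀ i : Fin (n + 1), c i • bM p n i
      = mkQ p n (MvPolynomial.C (c i) * pbF p n i) := by
    intro i
    rw [← MvPolynomial.smul_eq_C_mul, map_smul, hpb]
  have key : ∀ i : Fin (n + 1), Galg p n (MvPolynomial.C (c i) * pbF p n i)
      = c i ⊗ₜ[ℤ] uW p n i := by
    intro i
    induction i using Fin.cases with
    | zero =>
      rw [pbF, Fin.cons_zero, mul_one, Galg, MvPolynomial.aeval_C,
        Algebra.TensorProduct.algebraMap_apply, Algebra.algebraMap_self, RingHom.id_apply,
        uW, Fin.cons_zero]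
    | succ k =>
      rw [pbF, Fin.cons_succ, map_mul, Galg, MvPolynomial.aeval_C, MvPolynomial.aeval_X,
        Algebra.TensorProduct.algebraMap_apply, Algebra.algebraMap_self, RingHom.id_apply,
        Algebra.TensorProduct.tmul_mul_tmul, mul_one, one_mul, uW, Fin.cons_succ]
  rw [Finset.sum_congr rfl (fun i _ => hb i), ← map_sum, G_mkQ, map_sum,
    Finset.sum_congr rfl (fun i _ => key i)]

/-- The normalized ghost functionals as `ℤ`-linear maps. -/
noncomputable def DlHom (j : Fin (n + 1)) : T →ₗ[ℤ] ZMod p :=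
  (AddMonoidHom.mk' (Dl p n j) (fun a b => Dl_add p n j a b)).toIntLinearMap

/-- The induced functionals on the mod-`p` fiber. -/
noncomputable def eps (j : Fin (n + 1)) : Q →ₗ[ℤ] ZMod p :=
  TensorProduct.lift ((LinearMap.mul ℤ (ZMod p)).compl₂ (DlHom p n j))

lemma eps_tmul (j : Fin (n + 1)) (c : ZMod p) (a : T) :
    eps p n j (c ⊗ₜ[ℤ] a) = c * Dl p n j a := by
  rw [eps]
  rfl

lemma G_injective : Function.Injective (G p n) := by
  rw [injective_iff_map_eq_zero]
  intro m hm
  obtain ⟨c, rfl⟩ := exists_rep p n m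
  have hc : ∀ j : Fin (n + 1), c j = 0 := by
    intro j
    have h1 : eps p n j (G p n (∑ i, c i • bM p n i)) = c j := by
      rw [G_sum, map_sum, Finset.sum_congr rfl (fun i _ => eps_tmul p n j (c i) (uW p n i)),
        Finset.sum_congr rfl (fun i _ => by rw [Dl_u p n j i])]
      simp only [mul_ite, mul_one, mul_zero]
      rw [Finset.sum_ite_eq' Finset.univ j c, if_pos (Finset.mem_univ j)]
    rw [hm, map_zero] at h1
    exact h1.symm
  rw [Finset.sum_congr rfl (fun i _ => by rw [hc i, zero_smul]), Finset.sum_const_zero]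

lemma G_surjective : Function.Surjective (G p n) := by
  have key : ∀ z : T, ∃ m : M, G p n m = (1 : ZMod p) ⊗ₜ[ℤ] z := by
    intro z
    have hz := span_T p n z
    induction hz using Submodule.span_induction with
    | mem x hx =>
      rcases Set.mem_insert_iff.mp hx with rfl | ⟨i, rfl⟩
      · exact ⟨1, by rw [map_one, Algebra.TensorProduct.one_def]⟩
      · refine ⟨socleModelVar p n i, ?_⟩
        rw [x_eq, G_mkQ, Galg, MvPolynomial.aeval_X]
    | zero => exact ⟨0, by rw [map_zero, TensorProduct.tmul_zero]⟩
    | add x y hx hy ihx ihy =>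
      obtain ⟨mx, hmx⟩ := ihx
      obtain ⟨my, hmy⟩ := ihy
      exact ⟨mx + my, by rw [map_add, hmx, hmy, TensorProduct.tmul_add]⟩
    | smul k x hx ihx =>
      obtain ⟨mx, hmx⟩ := ihx
      exact ⟨k • mx, by rw [map_zsmul, hmx, TensorProduct.tmul_smul]⟩
  intro q
  induction q using TensorProduct.induction_on with
  | zero => exact ⟨0, map_zero _⟩
  | tmul c a =>
    obtain ⟨m, hm⟩ := key (((c.val : ℤ)) • a)
    refine ⟨m, ?_⟩
    rw [hm, TensorProduct.tmul_smul, TensorProduct.smul_tmul']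
    congr 1
    rw [zsmul_eq_mul, mul_one]
    push_cast
    exact ZMod.natCast_rightInverse c
  | add x y ihx ihy =>
    obtain ⟨mx, hmx⟩ := ihx
    obtain ⟨my, hmy⟩ := ihy
    exact ⟨mx + my, by rw [map_add, hmx, hmy]⟩

end Main

end WittSocle

/-- The mod-`p` fiber `ℤ/p ⊗ W_n(ℤ)` is isomorphic to
`𝔽_p[x_1,…,x_n]/(x_i·x_j : 1 ≤ i ≤ j ≤ n)`; consequently, for `n ≥ 2` the socle of this local
ring (the annihilator of its maximal ideal) has dimension `n > 1` over `𝔽_p`.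
(With normalized indexing, `W_n = TruncatedWittVector p (n+1)`.) -/
theorem mod_p_fiber_of_witt_int_and_socle (p : ℕ) [Fact p.Prime] (n : ℕ) :
    Nonempty ((ZMod p) ⊗[ℤ] TruncatedWittVector p (n + 1) ℤ ≃+* socleModelRing p n) ∧
    (∃ h : IsLocalRing (socleModelRing p n),
      @IsLocalRing.maximalIdeal (socleModelRing p n) _ h =
        Ideal.span (Set.range (socleModelVar p n))) ∧
    (2 ≤ n →
      Module.rank (ZMod p)
        ↥(Submodule.colon (⊥ : Submodule (socleModelRing p n) (socleModelRing p n))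
            (Ideal.span (Set.range (socleModelVar p n)))) = n ∧ 1 < n) := by
  refine ⟨⟨(RingEquiv.ofBijective (WittSocle.G p n)
      ⟨WittSocle.G_injective p n, WittSocle.G_surjective p n⟩).symm⟩,
    ⟨WittSocle.isLocal p n, ?_⟩, fun hn => ⟨?_, by omega⟩⟩
  · exact (@IsLocalRing.eq_maximalIdeal (socleModelRing p n) _ (WittSocle.isLocal p n) _
      (WittSocle.J_isMaximal p n)).symm
  · exact WittSocle.colon_rank p n (by omega)
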